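/- Let S₀, S₁, … be a saturation with respect to the PaRC calculus and S_ω = ⋃_{i≥0} S_i. Suppose a clause C occurs in S_ω (i.e., (C ⋈ R) ∈ S_ω for some R) and θ is a substitution grounding for C. Then the ground clause Cθ has a trace, i.e., there is a finite set {C₁,…,Cₙ} of persistent ground clauses with C₁,…,Cₙ ⊨ Cθ and Cθ ⪰ Cᵢ for all i = 1,…,n. -/

import Mathlib

set_option autoImplicit false

namespace PaRC

/-- First-order terms over a signature `F` with arity function `ar`;
variables are natural numbers. -/
inductive Trm (F : Type) (ar : F → ℕ) : Type
  | var : ℕ → Trm F ar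
  | app : (f : F) → (Fin (ar f) → Trm F ar) → Trm F ar

variable {F : Type} {ar : F → ℕ}

/-- Substitutions. -/
abbrev Subst (F : Type) (ar : F → ℕ) : Type := ℕ → Trm F ar

/-- Applying a substitution to a term. -/
def Trm.subst (σ : Subst F ar) : Trm F ar → Trm F ar
  | .var x => σ x
  | .app f a => .app f (fun i => (a i).subst σ)

/-- Composition of substitutions. -/
def Subst.comp (σ τ : Subst F ar) : Subst F ar := fun x => Trm.subst τ (σ x)

/-- A term is ground if it contains no variables. -/
def Trm.IsGround : Trm F ar → Prop
  | .var _ => False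
  | .app _ a => ∀ i, (a i).IsGround

/-- Free variables of a term. -/
def Trm.fvars : Trm F ar → Set ℕ
  | .var x => {x}
  | .app _ a => ⋃ i, (a i).fvars

/-- Subterm at a position (list of argument indices). -/
def Trm.atPos : Trm F ar → List ℕ → Option (Trm F ar)
  | t, [] => some t
  | .var _, _ :: _ => none
  | .app f a, i :: p => if h : i < ar f then Trm.atPos (a ⟨i, h⟩) p else none

/-- Replace the subterm at a given position. -/
def Trm.replace : Trm F ar → List ℕ → Trm F ar → Trm F ar
  | _, [], u => u
  | .var x, _ :: _, _ => .var x
  | .app f a, i :: p, u =>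
      if h : i < ar f then
        .app f (Function.update a ⟨i, h⟩ (Trm.replace (a ⟨i, h⟩) p u))
      else .app f a

/-- An equality literal: polarity together with the two sides. -/
structure Lit (F : Type) (ar : F → ℕ) : Type where
  pos : Bool
  lhs : Trm F ar
  rhs : Trm F ar

def Lit.subst (σ : Subst F ar) (L : Lit F ar) : Lit F ar :=
  ⟨L.pos, Trm.subst σ L.lhs, Trm.subst σ L.rhs⟩

def Lit.IsGround (L : Lit F ar) : Prop := L.lhs.IsGround ∧ L.rhs.IsGround

def Lit.fvars (L : Lit F ar) : Set ℕ := L.lhs.fvars ∪ L.rhs.fvars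

/-- A clause is a (finite) multiset of literals. -/
abbrev Clause (F : Type) (ar : F → ℕ) : Type := Multiset (Lit F ar)

def Clause.subst (σ : Subst F ar) (C : Clause F ar) : Clause F ar := C.map (Lit.subst σ)

def Clause.IsGround (C : Clause F ar) : Prop := ∀ L ∈ C, L.IsGround

def Clause.fvars (C : Clause F ar) : Set ℕ := {x | ∃ L ∈ C, x ∈ L.fvars}

/-- A substitution is grounding for a clause if the instance is ground. -/
def GroundingFor (θ : Subst F ar) (C : Clause F ar) : Prop :=
  Clause.IsGround (Clause.subst θ C)

/-- A term occurs in a clause if it is a subterm of a side of one of its literals. -/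
def OccursIn (u : Trm F ar) (C : Clause F ar) : Prop :=
  ∃ L ∈ C, ∃ p, Trm.atPos L.lhs p = some u ∨ Trm.atPos L.rhs p = some u

/-! ### Semantics: Σ-algebras, entailment and satisfiability -/

/-- A Σ-algebra (first-order structure for the purely equational signature). -/
structure Alg (F : Type) (ar : F → ℕ) : Type 1 where
  carrier : Type
  nonempty : Nonempty carrier
  interp : (f : F) → (Fin (ar f) → carrier) → carrier

def Trm.eval (A : Alg F ar) (v : ℕ → A.carrier) : Trm F ar → A.carrier
  | .var x => v x
  | .app f a => A.interp f (fun i => (a i).eval A v)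

def Lit.holds (A : Alg F ar) (v : ℕ → A.carrier) (L : Lit F ar) : Prop :=
  if L.pos then L.lhs.eval A v = L.rhs.eval A v else L.lhs.eval A v ≠ L.rhs.eval A v

/-- A clause is true in an algebra if it is true under every valuation
(variables are implicitly universally quantified). -/
def Clause.validIn (A : Alg F ar) (C : Clause F ar) : Prop :=
  ∀ v : ℕ → A.carrier, ∃ L ∈ C, Lit.holds A v L

/-- First-order entailment between a set of clauses and a clause. -/
def Entails (S : Set (Clause F ar)) (D : Clause F ar) : Prop :=
  ∀ A : Alg F ar, (∀ C ∈ S, Clause.validIn A C) → Clause.validIn A D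

/-- Satisfiability of a set of clauses. -/
def Satisfiable (S : Set (Clause F ar)) : Prop :=
  ∃ A : Alg F ar, ∀ C ∈ S, Clause.validIn A C

/-! ### Simplification orders and their bag extensions -/

/-- A simplification order: a reduction ordering that is total on ground terms
and has the subterm property. -/
structure SimpOrd (F : Type) (ar : F → ℕ) : Type where
  gt : Trm F ar → Trm F ar → Prop
  trans : ∀ {s t u : Trm F ar}, gt s t → gt t u → gt s u
  irrefl : ∀ s : Trm F ar, ¬ gt s s
  wf : WellFounded (fun s t : Trm F ar => gt t s)
  substStable : ∀ (σ : Subst F ar) {s t : Trm F ar}, gt s t →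
    gt (Trm.subst σ s) (Trm.subst σ t)
  ctxStable : ∀ (s : Trm F ar) (p : List ℕ) {l r : Trm F ar}, (Trm.atPos s p).isSome →
    gt l r → gt (Trm.replace s p l) (Trm.replace s p r)
  subterm : ∀ {s t : Trm F ar} (p : List ℕ), Trm.atPos s p = some t → s ≠ t → gt s t
  totalGround : ∀ {s t : Trm F ar}, s.IsGround → t.IsGround → s ≠ t → gt s t ∨ gt t s

/-- Bag (Dershowitz–Manna multiset) extension of an ordering: `N > M`. -/
def MultGT {α : Type} (r : α → α → Prop) (N M : Multiset α) : Prop :=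
  ∃ X Y Z : Multiset α, X ≠ 0 ∧ N = Z + X ∧ M = Z + Y ∧ ∀ y ∈ Y, ∃ x ∈ X, r x y

/-- The multiset of terms associated to a literal:
`{s, t}` for `s ≈ t` and `{s, s, t, t}` for `s ≉ t`. -/
def Lit.ms (L : Lit F ar) : Multiset (Trm F ar) :=
  if L.pos then {L.lhs, L.rhs} else {L.lhs, L.lhs, L.rhs, L.rhs}

/-- The induced ordering on literals. -/
def litGT (O : SimpOrd F ar) (L M : Lit F ar) : Prop := MultGT O.gt L.ms M.ms

/-- The induced ordering on clauses. -/
def clauseGT (O : SimpOrd F ar) (C D : Clause F ar) : Prop := MultGT (litGT O) C D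

def clauseGE (O : SimpOrd F ar) (C D : Clause F ar) : Prop := clauseGT O C D ∨ C = D

/-- A ground clause `D` is redundant w.r.t. a set `S` of ground clauses if it is
entailed by finitely many clauses of `S` that are all smaller than `D`. -/
def Redundant (O : SimpOrd F ar) (S : Set (Clause F ar)) (D : Clause F ar) : Prop :=
  ∃ Cs : List (Clause F ar), (∀ C ∈ Cs, C ∈ S) ∧
    Entails {C | C ∈ Cs} D ∧ ∀ C ∈ Cs, clauseGT O D C

/-! ### Redundancy formulas and partial clauses -/

/-- Redundancy formulas: first-order formulas over the term algebra extended with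
the interpreted predicates `≻` (the simplification order) and equality. -/
inductive RForm (F : Type) (ar : F → ℕ) : Type
  | falsum : RForm F ar
  | verum : RForm F ar
  | eq (s t : Trm F ar) : RForm F ar
  | gt (s t : Trm F ar) : RForm F ar
  | and (a b : RForm F ar) : RForm F ar
  | or (a b : RForm F ar) : RForm F ar
  | ex (x : ℕ) (a : RForm F ar) : RForm F ar

def RForm.subst (σ : Subst F ar) : RForm F ar → RForm F ar
  | .falsum => .falsum
  | .verum => .verum
  | .eq s t => .eq (Trm.subst σ s) (Trm.subst σ t)
  | .gt s t => .gt (Trm.subst σ s) (Trm.subst σ t)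
  | .and a b => .and (a.subst σ) (b.subst σ)
  | .or a b => .or (a.subst σ) (b.subst σ)
  | .ex x a => .ex x (a.subst fun y => if y = x then Trm.var x else σ y)

def RForm.fvars : RForm F ar → Set ℕ
  | .falsum => ∅
  | .verum => ∅
  | .eq s t => s.fvars ∪ t.fvars
  | .gt s t => s.fvars ∪ t.fvars
  | .and a b => a.fvars ∪ b.fvars
  | .or a b => a.fvars ∪ b.fvars
  | .ex x a => a.fvars \ {x}

/-- Truth of a redundancy formula in the extended term algebra `T_R(Σ)`,
under a valuation `v` mapping variables to (ground) terms. -/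
def RForm.realize (O : SimpOrd F ar) (v : Subst F ar) : RForm F ar → Prop
  | .falsum => False
  | .verum => True
  | .eq s t => Trm.subst v s = Trm.subst v t
  | .gt s t => O.gt (Trm.subst v s) (Trm.subst v t)
  | .and a b => a.realize O v ∧ b.realize O v
  | .or a b => a.realize O v ∨ b.realize O v
  | .ex x a => ∃ g : Trm F ar, g.IsGround ∧ a.realize O (Function.update v x g)

/-- `σ ⊨ R`: every ground instance of `Rσ` is true in `T_R(Σ)`. -/
def RSat (O : SimpOrd F ar) (σ : Subst F ar) (R : RForm F ar) : Prop :=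
  ∀ v : Subst F ar, (∀ x, (v x).IsGround) → RForm.realize O v (RForm.subst σ R)

theorem RForm.falsum_fvars_sub (s : Set ℕ) : RForm.fvars (.falsum : RForm F ar) ⊆ s := by
  intro x hx; simp [RForm.fvars] at hx

/-- `s ⪰ t` as a redundancy formula. -/
def RForm.ge (s t : Trm F ar) : RForm F ar := .or (.gt s t) (.eq s t)

/-- `(s ≐ t) ⪰ l` as a redundancy formula. -/
def Lit.geForm (L : Lit F ar) (l : Trm F ar) : RForm F ar :=
  .or (RForm.ge L.lhs l) (RForm.ge L.rhs l)

/-- `(s ≐ t) ≻ l` as a redundancy formula. -/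
def Lit.gtForm (L : Lit F ar) (l : Trm F ar) : RForm F ar :=
  .or (.gt L.lhs l) (.gt L.rhs l)

/-- `C ⪰ l` as a redundancy formula (disjunction over the literals of `C`). -/
noncomputable def Clause.geForm (C : Clause F ar) (l : Trm F ar) : RForm F ar :=
  C.toList.foldr (fun L acc => RForm.or (Lit.geForm L l) acc) RForm.falsum

/-- `C ≻ l` as a redundancy formula (disjunction over the literals of `C`). -/
noncomputable def Clause.gtForm (C : Clause F ar) (l : Trm F ar) : RForm F ar :=
  C.toList.foldr (fun L acc => RForm.or (Lit.gtForm L l) acc) RForm.falsum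

/-- A partial clause `C ⋈ R`: a clause together with a redundancy formula all of
whose free variables occur in the clause. -/
structure PClause (F : Type) (ar : F → ℕ) : Type where
  cl : Clause F ar
  rf : RForm F ar
  hfv : RForm.fvars rf ⊆ Clause.fvars cl

/-- `⌊C ⋈ R⌋`: the ground instances `Cθ` with `θ ⊭ R`. -/
def pgnd (O : SimpOrd F ar) (pc : PClause F ar) : Set (Clause F ar) :=
  {D | ∃ θ : Subst F ar, D = Clause.subst θ pc.cl ∧ Clause.IsGround D ∧ ¬ RSat O θ pc.rf}

/-- `⌊S⌋` for a set of partial clauses. -/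
def gndS (O : SimpOrd F ar) (S : Set (PClause F ar)) : Set (Clause F ar) :=
  ⋃ pc ∈ S, pgnd O pc

/-- `S*`: all ground instances of clauses occurring in `S`. -/
def gstar (S : Set (PClause F ar)) : Set (Clause F ar) :=
  {D | ∃ pc ∈ S, ∃ θ : Subst F ar, D = Clause.subst θ pc.cl ∧ Clause.IsGround D}

/-! ### The PaRC calculus -/

def IsUnifier (σ : Subst F ar) (s t : Trm F ar) : Prop := Trm.subst σ s = Trm.subst σ t

def IsMGU (σ : Subst F ar) (s t : Trm F ar) : Prop :=
  IsUnifier σ s t ∧ ∀ η : Subst F ar, IsUnifier η s t → ∃ μ : Subst F ar, η = Subst.comp σ μ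

/-- A literal selection function satisfying the standard condition w.r.t. `≻`. -/
structure SelFun (F : Type) (ar : F → ℕ) (O : SimpOrd F ar) : Type where
  sel : Clause F ar → Set (Lit F ar)
  subset : ∀ C : Clause F ar, sel C ⊆ {L | L ∈ C}
  nonemptyOn : ∀ C : Clause F ar, C ≠ 0 → (sel C).Nonempty
  standard : ∀ C : Clause F ar,
    (∃ L ∈ sel C, L.pos = false) ∨ ∀ L ∈ sel C, ∀ M ∈ C, ¬ litGT O M L

/-- The inference rules of the PaRC calculus on partial clauses.
`Inf O sel prems σ concl` means: there is a PaRC inference with premises `prems`,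
most general unifier `σ`, and conclusion `concl`; selected literals are the displayed
first literals of the premises. -/
inductive Inf (O : SimpOrd F ar) (sel : SelFun F ar O) :
    List (PClause F ar) → Subst F ar → Clause F ar → Prop
  | sup {l r : Trm F ar} {C₁ : Clause F ar} {R₁ : RForm F ar}
      {h₁ : RForm.fvars R₁ ⊆ Clause.fvars (Lit.mk true l r ::ₘ C₁)}
      {b : Bool} {s t : Trm F ar} {C₂ : Clause F ar} {R₂ : RForm F ar}
      {h₂ : RForm.fvars R₂ ⊆ Clause.fvars (Lit.mk b s t ::ₘ C₂)}
      {p : List ℕ} {l' : Trm F ar} {σ : Subst F ar} :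
      Trm.atPos s p = some l' →
      (∀ x, l' ≠ .var x) →
      IsMGU σ l l' →
      Lit.mk true l r ∈ sel.sel (Lit.mk true l r ::ₘ C₁) →
      Lit.mk b s t ∈ sel.sel (Lit.mk b s t ::ₘ C₂) →
      ¬ RSat O σ (RForm.ge r l) →
      ¬ RSat O σ (RForm.ge t s) →
      ¬ RSat O σ (Clause.geForm C₁ l) →
      (b = true → ¬ RSat O σ (Clause.geForm C₂ s)) →
      ¬ RSat O σ R₁ →
      ¬ RSat O σ R₂ →
      Inf O sel [⟨Lit.mk true l r ::ₘ C₁, R₁, h₁⟩, ⟨Lit.mk b s t ::ₘ C₂, R₂, h₂⟩] σ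
        (Clause.subst σ (Lit.mk b (Trm.replace s p r) t ::ₘ (C₁ + C₂)))
  | eqres {s t : Trm F ar} {C : Clause F ar} {R : RForm F ar}
      {h : RForm.fvars R ⊆ Clause.fvars (Lit.mk false s t ::ₘ C)} {σ : Subst F ar} :
      IsMGU σ s t →
      Lit.mk false s t ∈ sel.sel (Lit.mk false s t ::ₘ C) →
      ¬ RSat O σ R →
      Inf O sel [⟨Lit.mk false s t ::ₘ C, R, h⟩] σ (Clause.subst σ C)
  | eqfac {s t s' t' : Trm F ar} {C : Clause F ar} {R : RForm F ar}
      {h : RForm.fvars R ⊆ Clause.fvars (Lit.mk true s t ::ₘ Lit.mk true s' t' ::ₘ C)}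
      {σ : Subst F ar} :
      IsMGU σ s s' →
      Lit.mk true s t ∈ sel.sel (Lit.mk true s t ::ₘ Lit.mk true s' t' ::ₘ C) →
      Lit.mk true s' t' ∈ sel.sel (Lit.mk true s t ::ₘ Lit.mk true s' t' ::ₘ C) →
      ¬ RSat O σ (RForm.ge t s) →
      ¬ RSat O σ (RForm.gt t' t) →
      ¬ RSat O σ (Clause.gtForm C s) →
      ¬ RSat O σ R →
      Inf O sel [⟨Lit.mk true s t ::ₘ Lit.mk true s' t' ::ₘ C, R, h⟩] σ
        (Clause.subst σ (Lit.mk true s t ::ₘ Lit.mk false t t' ::ₘ C))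

/-! ### Saturation -/

/-- A saturation w.r.t. the PaRC calculus: `S 0` consists of partial clauses of the
form `C ⋈ ⊥`, and each step is either an inference step or a redundancy step. -/
structure Saturation (O : SimpOrd F ar) (sel : SelFun F ar O) : Type where
  S : ℕ → Set (PClause F ar)
  init : ∀ pc ∈ S 0, pc.rf = RForm.falsum
  step : ∀ i : ℕ,
    (∃ (prems : List (PClause F ar)) (σ : Subst F ar) (concl : Clause F ar),
        (∀ pc ∈ prems, pc ∈ S i) ∧ Inf O sel prems σ concl ∧
        S (i + 1) = S i ∪ {⟨concl, RForm.falsum, RForm.falsum_fvars_sub _⟩}) ∨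
    (∃ pc ∈ S i, ∃ (R₂ : RForm F ar)
        (h : RForm.fvars (RForm.or pc.rf R₂) ⊆ Clause.fvars pc.cl),
        (∀ θ : Subst F ar, GroundingFor θ pc.cl → RSat O θ R₂ →
          Redundant O (gstar (S i)) (Clause.subst θ pc.cl)) ∧
        S (i + 1) = (S i \ {pc}) ∪ {⟨pc.cl, RForm.or pc.rf R₂, h⟩})

variable {O : SimpOrd F ar} {sel : SelFun F ar O}

/-- `S_ω = ⋃ i, S i`. -/
def Saturation.Somega (𝕊 : Saturation O sel) : Set (PClause F ar) := ⋃ i, 𝕊.S i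

/-- The limit `⋃_{i≥0} ⋂_{j≥i} ⌊S_j⌋` of a saturation. -/
def Saturation.limit (𝕊 : Saturation O sel) : Set (Clause F ar) :=
  ⋃ i : ℕ, ⋂ j : ℕ, ⋂ (_ : j ≥ i), gndS O (𝕊.S j)

/-- A ground clause is persistent if it belongs to the limit. -/
def Saturation.Persistent (𝕊 : Saturation O sel) (C : Clause F ar) : Prop := C ∈ 𝕊.limit

/-- Fairness of a saturation. -/
def Saturation.Fair (𝕊 : Saturation O sel) : Prop :=
  ∀ (prems : List (PClause F ar)) (σ : Subst F ar) (concl : Clause F ar) (ρ : Subst F ar),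
    Inf O sel prems σ concl →
    (∀ pc ∈ prems, 𝕊.Persistent (Clause.subst ρ (Clause.subst σ pc.cl))) →
    ∃ i : ℕ, (⟨concl, RForm.falsum, RForm.falsum_fvars_sub _⟩ : PClause F ar) ∈ 𝕊.S i

/-! ### Ground rewrite systems and the model construction -/

/-- One-step ground rewriting with a set of (ground) rewrite rules. -/
def Rw (I : Set (Trm F ar × Trm F ar)) (s t : Trm F ar) : Prop :=
  ∃ lr ∈ I, ∃ p : List ℕ, Trm.atPos s p = some lr.1 ∧ t = Trm.replace s p lr.2

def RwStar (I : Set (Trm F ar × Trm F ar)) : Trm F ar → Trm F ar → Prop :=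
  Relation.ReflTransGen (Rw I)

/-- A term is irreducible (a normal form) in `I`. -/
def NormalForm (I : Set (Trm F ar × Trm F ar)) (t : Trm F ar) : Prop := ∀ u, ¬ Rw I t u

/-- `s` and `t` have the same normal form in `I`. -/
def SameNF (I : Set (Trm F ar × Trm F ar)) (s t : Trm F ar) : Prop :=
  ∃ u : Trm F ar, RwStar I s u ∧ RwStar I t u ∧ NormalForm I u

/-- Truth of a ground clause in the interpretation given by a rewrite system. -/
def TrueIn (I : Set (Trm F ar × Trm F ar)) (C : Clause F ar) : Prop :=
  ∃ L ∈ C, if L.pos then SameNF I L.lhs L.rhs else ¬ SameNF I L.lhs L.rhs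

def NonOverlapping (I : Set (Trm F ar × Trm F ar)) : Prop :=
  ∀ lr ∈ I, ∀ lr' ∈ I, lr ≠ lr' → ∀ p : List ℕ, Trm.atPos (Prod.fst lr) p ≠ some (Prod.fst lr')

def Terminating (I : Set (Trm F ar × Trm F ar)) : Prop :=
  WellFounded (fun s t : Trm F ar => Rw I t s)

def Confluent (I : Set (Trm F ar × Trm F ar)) : Prop :=
  ∀ a b c : Trm F ar, RwStar I a b → RwStar I a c → ∃ d, RwStar I b d ∧ RwStar I c d

/-- The productivity condition of the model construction: there is a partial clause
`(l₁ ≈ r₁ ∨ C ⋈ R) ∈ S_ω` (with `l₁ ≈ r₁` selected) and a grounding substitution `θ`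
with `l₁θ = l`, `l₁θ ≻ r₁θ`, `l₁θ ≻ Cθ`, `θ ⊭ R`, `I_{≺l} ⊭ Cθ`, producing the rule
`l → rr` where `rr = r₁θ`. -/
def ProducesWith (O : SimpOrd F ar) (sel : SelFun F ar O) (Sω : Set (PClause F ar))
    (Ipre : Set (Trm F ar × Trm F ar)) (l rr : Trm F ar) : Prop :=
  ∃ (l₁ r₁ : Trm F ar) (C : Clause F ar) (R : RForm F ar)
    (h : RForm.fvars R ⊆ Clause.fvars (Lit.mk true l₁ r₁ ::ₘ C)) (θ : Subst F ar),
    (⟨Lit.mk true l₁ r₁ ::ₘ C, R, h⟩ : PClause F ar) ∈ Sω ∧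
    Lit.mk true l₁ r₁ ∈ sel.sel (Lit.mk true l₁ r₁ ::ₘ C) ∧
    GroundingFor θ (Lit.mk true l₁ r₁ ::ₘ C) ∧
    Trm.subst θ l₁ = l ∧
    O.gt (Trm.subst θ l₁) (Trm.subst θ r₁) ∧
    (∀ L ∈ Clause.subst θ C, O.gt (Trm.subst θ l₁) L.lhs ∧ O.gt (Trm.subst θ l₁) L.rhs) ∧
    ¬ RSat O θ R ∧
    ¬ TrueIn Ipre (Clause.subst θ C) ∧
    rr = Trm.subst θ r₁

/-- The rewrite system `I_l` of the model construction, defined by well-founded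
recursion on `≻`. -/
noncomputable def Interp (O : SimpOrd F ar) (sel : SelFun F ar O)
    (Sω : Set (PClause F ar)) : Trm F ar → Set (Trm F ar × Trm F ar) :=
  WellFounded.fix (C := fun _ => Set (Trm F ar × Trm F ar)) O.wf
    (fun l Irec =>
      let Ipre : Set (Trm F ar × Trm F ar) := ⋃ (r : Trm F ar), ⋃ (h : O.gt l r), Irec r h
      letI := Classical.propDecidable
      if h : NormalForm Ipre l ∧ ∃ rr, ProducesWith O sel Sω Ipre l rr then
        Ipre ∪ {(l, h.2.choose)}
      else Ipre)

/-- The rewrite system `I_{≺l}` of the model construction. -/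
noncomputable def IPre (O : SimpOrd F ar) (sel : SelFun F ar O)
    (Sω : Set (PClause F ar)) (l : Trm F ar) : Set (Trm F ar × Trm F ar) :=
  ⋃ (r : Trm F ar), ⋃ (_ : O.gt l r), Interp O sel Sω r

/-- The rewrite system `I_ω = ⋃_l I_l` of the model construction. -/
noncomputable def IOmega (O : SimpOrd F ar) (sel : SelFun F ar O)
    (Sω : Set (PClause F ar)) : Set (Trm F ar × Trm F ar) :=
  ⋃ (l : Trm F ar), Interp O sel Sω l

/-! ### Auxiliary lemmas for the trace theorem -/

section Aux

open Relation

variable {α : Type} {r : α → α → Prop}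

lemma multGT_of_cutExpand (hirr : ∀ a, ¬ r a a) {M P : Multiset α}
    (h : CutExpand (fun a b => r b a) P M) : MultGT r M P := by
  classical
  have : IsIrrefl α (fun a b => r b a) := ⟨fun a => hirr a⟩
  rw [cutExpand_iff] at h
  obtain ⟨t, a, ht, haM, rfl⟩ := h
  refine ⟨{a}, t, M.erase a, by simp, ?_, rfl, fun y hy => ⟨a, by simp, ht y hy⟩⟩
  rw [add_comm, Multiset.singleton_add, Multiset.cons_erase haM]

lemma multGT_cutExpand (htr : Transitive r) (hirr : ∀ a, ¬ r a a) {N M P : Multiset α}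
    (h1 : MultGT r N M) (h2 : CutExpand (fun a b => r b a) P M) : MultGT r N P := by
  classical
  have : IsIrrefl α (fun a b => r b a) := ⟨fun a => hirr a⟩
  rw [cutExpand_iff] at h2
  obtain ⟨t, a, ht, haM, rfl⟩ := h2
  obtain ⟨X, Y, Z, hX, hN, rfl, hdom⟩ := h1
  rcases Multiset.mem_add.1 haM with haZ | haY
  · refine ⟨X + {a}, Y + t, Z.erase a, ?_, ?_, ?_, ?_⟩
    · intro hc
      have : (a : α) ∈ X + {a} := Multiset.mem_add.2 (Or.inr (Multiset.mem_singleton_self a))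
      rw [hc] at this; exact absurd this (Multiset.notMem_zero a)
    · have hZ : Z = Z.erase a + {a} := by
        rw [add_comm, Multiset.singleton_add, Multiset.cons_erase haZ]
      rw [hN]; conv_lhs => rw [hZ]
      abel
    · rw [Multiset.erase_add_left_pos _ haZ]; abel
    · intro y hy
      rcases Multiset.mem_add.1 hy with hy | hy
      · obtain ⟨x, hx, hr⟩ := hdom y hy
        exact ⟨x, Multiset.mem_add.2 (Or.inl hx), hr⟩
      · exact ⟨a, Multiset.mem_add.2 (Or.inr (Multiset.mem_singleton_self a)), ht y hy⟩
  · obtain ⟨x₀, hx₀, hr₀⟩ := hdom a haY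
    refine ⟨X, Y.erase a + t, Z, hX, hN, ?_, ?_⟩
    · rw [Multiset.erase_add_right_pos _ haY]; abel
    · intro y hy
      rcases Multiset.mem_add.1 hy with hy | hy
      · exact hdom y (Multiset.mem_of_mem_erase hy)
      · exact ⟨x₀, hx₀, htr hr₀ (ht y hy)⟩

lemma multGT_of_transGen (htr : Transitive r) (hirr : ∀ a, ¬ r a a) {N P : Multiset α}
    (h : TransGen (CutExpand (fun a b => r b a)) P N) : MultGT r N P := by
  induction h using Relation.TransGen.head_induction_on with
  | single h => exact multGT_of_cutExpand hirr h
  | head h₁ _ ih => exact multGT_cutExpand htr hirr ih h₁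

lemma multGT_to_transGen_aux :
    ∀ (n : ℕ) (X Y Z : Multiset α), Multiset.card X = n → X ≠ 0 →
      (∀ y ∈ Y, ∃ x ∈ X, r x y) →
      TransGen (CutExpand (fun a b => r b a)) (Z + Y) (Z + X) := by
  intro n
  induction n using Nat.strong_induction_on with
  | _ n ih =>
    intro X Y Z hcard hX hdom
    classical
    obtain ⟨x, hx⟩ := Multiset.exists_mem_of_ne_zero hX
    set X' := X.erase x with hX'def
    set Y₁ := Y.filter (fun y => r x y) with hY₁
    set Y₂ := Y.filter (fun y => ¬ r x y) with hY₂
    have hY : Y₁ + Y₂ = Y := Multiset.filter_add_not _ _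
    have hY₁dom : ∀ a' ∈ Y₁, r x a' := fun a' ha' => Multiset.of_mem_filter ha'
    have hdom₂ : ∀ y ∈ Y₂, ∃ x' ∈ X', r x' y := by
      intro y hy
      obtain ⟨x', hx', hr⟩ := hdom y (Multiset.mem_filter.1 hy).1
      have hne : x' ≠ x := by
        intro e; exact (Multiset.of_mem_filter hy) (e ▸ hr)
      exact ⟨x', (Multiset.mem_erase_of_ne hne).2 hx', hr⟩
    have hXeq : x ::ₘ X' = X := Multiset.cons_erase hx
    by_cases hX0 : X' = 0
    · have hY₂0 : Y₂ = 0 := by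
        apply Multiset.eq_zero_of_forall_notMem
        intro y hy
        obtain ⟨x', hx', _⟩ := hdom₂ y hy
        rw [hX0] at hx'; exact Multiset.notMem_zero _ hx'
      have hXx : X = {x} := by rw [← hXeq, hX0]; rfl
      refine TransGen.single ⟨Y₁, x, hY₁dom, ?_⟩
      rw [hXx, ← hY, hY₂0, add_zero]
      have : ({x} : Multiset α) = {x} := rfl
      abel
    · have hcard' : Multiset.card X' < n := by
        rw [← hcard]; exact Multiset.card_erase_lt_of_mem hx
      have step1 := ih _ hcard' X' Y₂ (Z + Y₁) rfl hX0 hdom₂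
      have step2 : CutExpand (fun a b => r b a) (Z + Y₁ + X') (Z + X) := by
        refine ⟨Y₁, x, hY₁dom, ?_⟩
        rw [← hXeq, ← Multiset.singleton_add]
        abel
      have hrw : Z + Y = Z + Y₁ + Y₂ := by rw [← hY]; abel
      rw [hrw]
      exact step1.tail step2

lemma multGT_to_transGen {N M : Multiset α} (h : MultGT r N M) :
    TransGen (CutExpand (fun a b => r b a)) M N := by
  obtain ⟨X, Y, Z, hX, rfl, rfl, hdom⟩ := h
  exact multGT_to_transGen_aux _ X Y Z rfl hX hdom

lemma multGT_trans (htr : Transitive r) (hirr : ∀ a, ¬ r a a) {N M P : Multiset α}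
    (h1 : MultGT r N M) (h2 : MultGT r M P) : MultGT r N P :=
  multGT_of_transGen htr hirr ((multGT_to_transGen h2).trans (multGT_to_transGen h1))

lemma multGT_wf (hwf : WellFounded (fun a b => r b a)) :
    WellFounded (fun M N : Multiset α => MultGT r N M) :=
  Subrelation.wf (fun h => multGT_to_transGen h) hwf.cutExpand.transGen

lemma multGT_irrefl (hwf : WellFounded (fun a b => r b a)) (N : Multiset α) :
    ¬ MultGT r N N := fun h => (multGT_wf hwf).asymmetric _ _ h h

end Aux
section Aux2

variable {F : Type} {ar : F → ℕ}

lemma Trm.subst_congr {v w : Subst F ar} : ∀ {t : Trm F ar},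
    (∀ x ∈ t.fvars, v x = w x) → t.subst v = t.subst w
  | .var x, h => h x (by simp [Trm.fvars])
  | .app f a, h => by
    simp only [Trm.subst]
    congr 1
    funext i
    exact Trm.subst_congr (fun x hx => h x (by
      simp only [Trm.fvars, Set.mem_iUnion]; exact ⟨i, hx⟩))

lemma Trm.subst_ground {v : Subst F ar} : ∀ {t : Trm F ar}, t.IsGround → t.subst v = t
  | .var _, h => absurd h (by simp [Trm.IsGround])
  | .app f a, h => by
    simp only [Trm.subst]
    congr 1
    funext i
    exact Trm.subst_ground (h i)

lemma Trm.isGround_subst {v : Subst F ar} : ∀ {t : Trm F ar},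
    (∀ x ∈ t.fvars, (v x).IsGround) → (t.subst v).IsGround
  | .var x, h => h x (by simp [Trm.fvars])
  | .app f a, h => fun i => Trm.isGround_subst (fun x hx => h x (by
      simp only [Trm.fvars, Set.mem_iUnion]; exact ⟨i, hx⟩))

lemma Trm.isGround_of_subst {v : Subst F ar} : ∀ {t : Trm F ar},
    (Trm.subst v t).IsGround → ∀ x ∈ t.fvars, (v x).IsGround
  | .var y, h => by
    intro x hx
    have : x = y := by simpa [Trm.fvars] using hx
    subst this; exact h
  | .app f a, h => by
    intro x hx
    simp only [Trm.fvars, Set.mem_iUnion] at hx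
    obtain ⟨i, hi⟩ := hx
    exact Trm.isGround_of_subst (h i) x hi

lemma Trm.not_mem_fvars_of_ground {x : ℕ} : ∀ {t : Trm F ar}, t.IsGround → x ∉ t.fvars
  | .var _, h => absurd h (by simp [Trm.IsGround])
  | .app f a, h => by
    simp only [Trm.fvars, Set.mem_iUnion]
    rintro ⟨i, hi⟩
    exact Trm.not_mem_fvars_of_ground (h i) hi

lemma Trm.fvars_subst_subset {v : Subst F ar} {x : ℕ} : ∀ {t : Trm F ar},
    x ∈ (t.subst v).fvars → ∃ y ∈ t.fvars, x ∈ (v y).fvars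
  | .var y, h => ⟨y, by simp [Trm.fvars], h⟩
  | .app f a, h => by
    simp only [Trm.subst, Trm.fvars, Set.mem_iUnion] at h
    obtain ⟨i, hi⟩ := h
    obtain ⟨y, hy, hx⟩ := Trm.fvars_subst_subset hi
    exact ⟨y, by simp only [Trm.fvars, Set.mem_iUnion]; exact ⟨i, hy⟩, hx⟩

lemma RForm.fvars_subst_subset {x : ℕ} : ∀ {R : RForm F ar} {v : Subst F ar},
    x ∈ (R.subst v).fvars → ∃ y ∈ R.fvars, x ∈ (v y).fvars := by
  intro R
  induction R with
  | falsum => intro v h; simp [RForm.subst, RForm.fvars] at h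
  | verum => intro v h; simp [RForm.subst, RForm.fvars] at h
  | eq s t =>
    intro v h
    simp only [RForm.subst, RForm.fvars, Set.mem_union] at h ⊢
    rcases h with h | h
    · obtain ⟨y, hy, hx⟩ := Trm.fvars_subst_subset h; exact ⟨y, Or.inl hy, hx⟩
    · obtain ⟨y, hy, hx⟩ := Trm.fvars_subst_subset h; exact ⟨y, Or.inr hy, hx⟩
  | gt s t =>
    intro v h
    simp only [RForm.subst, RForm.fvars, Set.mem_union] at h ⊢
    rcases h with h | h
    · obtain ⟨y, hy, hx⟩ := Trm.fvars_subst_subset h; exact ⟨y, Or.inl hy, hx⟩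
    · obtain ⟨y, hy, hx⟩ := Trm.fvars_subst_subset h; exact ⟨y, Or.inr hy, hx⟩
  | and a b iha ihb =>
    intro v h
    simp only [RForm.subst, RForm.fvars, Set.mem_union] at h ⊢
    rcases h with h | h
    · obtain ⟨y, hy, hx⟩ := iha h; exact ⟨y, Or.inl hy, hx⟩
    · obtain ⟨y, hy, hx⟩ := ihb h; exact ⟨y, Or.inr hy, hx⟩
  | or a b iha ihb =>
    intro v h
    simp only [RForm.subst, RForm.fvars, Set.mem_union] at h ⊢
    rcases h with h | h
    · obtain ⟨y, hy, hx⟩ := iha h; exact ⟨y, Or.inl hy, hx⟩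
    · obtain ⟨y, hy, hx⟩ := ihb h; exact ⟨y, Or.inr hy, hx⟩
  | ex z a iha =>
    intro v h
    simp only [RForm.subst, RForm.fvars, Set.mem_diff, Set.mem_singleton_iff] at h ⊢
    obtain ⟨h1, h2⟩ := h
    obtain ⟨y, hy, hx⟩ := iha h1
    by_cases hyz : y = z
    · subst hyz
      simp only [if_pos rfl, Trm.fvars, Set.mem_singleton_iff] at hx
      exact absurd hx h2
    · rw [if_neg hyz] at hx
      exact ⟨y, ⟨hy, hyz⟩, hx⟩

lemma RForm.realize_congr {O : SimpOrd F ar} : ∀ {R : RForm F ar} {v w : Subst F ar},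
    (∀ x ∈ R.fvars, v x = w x) → (R.realize O v ↔ R.realize O w) := by
  intro R
  induction R with
  | falsum => intro v w _; exact Iff.rfl
  | verum => intro v w _; exact Iff.rfl
  | eq s t =>
    intro v w h
    simp only [RForm.realize]
    rw [Trm.subst_congr (fun x hx => h x (Or.inl hx)),
      Trm.subst_congr (fun x hx => h x (Or.inr hx))]
  | gt s t =>
    intro v w h
    simp only [RForm.realize]
    rw [Trm.subst_congr (fun x hx => h x (Or.inl hx)),
      Trm.subst_congr (fun x hx => h x (Or.inr hx))]
  | and a b iha ihb =>
    intro v w h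
    simp only [RForm.realize]
    rw [iha (fun x hx => h x (Or.inl hx)), ihb (fun x hx => h x (Or.inr hx))]
  | or a b iha ihb =>
    intro v w h
    simp only [RForm.realize]
    rw [iha (fun x hx => h x (Or.inl hx)), ihb (fun x hx => h x (Or.inr hx))]
  | ex z a iha =>
    intro v w h
    simp only [RForm.realize]
    refine exists_congr fun g => and_congr_right fun _ => iha ?_
    intro x hx
    by_cases hxz : x = z
    · subst hxz; simp [Function.update]
    · rw [Function.update_of_ne hxz, Function.update_of_ne hxz]
      exact h x ⟨hx, hxz⟩

/-- `σ ⊨ A ∨ B` implies `σ ⊨ A` or `σ ⊨ B` when `σ` is ground on the free variables. -/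
lemma rsat_or_elim {O : SimpOrd F ar} {θ : Subst F ar} {A B : RForm F ar}
    (hgr : ∀ x ∈ (RForm.or A B).fvars, (θ x).IsGround)
    (hsat : RSat O θ (RForm.or A B)) : RSat O θ A ∨ RSat O θ B := by
  by_contra hc
  push_neg at hc
  obtain ⟨hA, hB⟩ := hc
  simp only [RSat, not_forall] at hA hB
  obtain ⟨v₁, hv₁g, hv₁⟩ := hA
  obtain ⟨v₂, hv₂g, hv₂⟩ := hB
  have h1 := hsat v₁ hv₁g
  simp only [RForm.subst, RForm.realize] at h1
  rcases h1 with h1 | h1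
  · exact hv₁ h1
  · have hclosed : ∀ x ∈ (RForm.subst θ B).fvars, v₁ x = v₂ x := by
      intro x hx
      obtain ⟨y, hy, hxy⟩ := RForm.fvars_subst_subset hx
      exact absurd hxy (Trm.not_mem_fvars_of_ground (hgr y (Or.inr hy)))
    exact hv₂ ((RForm.realize_congr hclosed).1 h1)

lemma exists_ground_trm (hconst : ∃ c : F, ar c = 0) : ∃ g : Trm F ar, g.IsGround := by
  obtain ⟨c, hc⟩ := hconst
  exact ⟨.app c (fun i => absurd i.isLt (by omega)),
    fun i => absurd i.isLt (by omega)⟩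

lemma not_rsat_falsum {O : SimpOrd F ar} {g : Trm F ar} (hg : g.IsGround) (θ : Subst F ar) :
    ¬ RSat O θ RForm.falsum := fun h => h (fun _ => g) (fun _ => hg)

lemma groundingFor_vars {θ : Subst F ar} {C : Clause F ar} (hθ : GroundingFor θ C) :
    ∀ x ∈ Clause.fvars C, (θ x).IsGround := by
  rintro x ⟨L, hL, hx⟩
  have hLg : (Lit.subst θ L).IsGround :=
    hθ _ (Multiset.mem_map_of_mem _ hL)
  rcases hx with hx | hx
  · exact Trm.isGround_of_subst hLg.1 x hx
  · exact Trm.isGround_of_subst hLg.2 x hx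

lemma Entails.mono {S T : Set (Clause F ar)} (hST : S ⊆ T) {D : Clause F ar}
    (h : Entails S D) : Entails T D :=
  fun A hA => h A (fun E hE => hA E (hST hE))

lemma entails_self {D : Clause F ar} : Entails {E : Clause F ar | E ∈ [D]} D :=
  fun A hA => hA D (by simp)

lemma combine_traces {O : SimpOrd F ar} (PP : Clause F ar → Prop) (D : Clause F ar) :
    ∀ Cs : List (Clause F ar),
    (∀ E ∈ Cs, ∃ tr : List (Clause F ar), (∀ G ∈ tr, PP G) ∧
      Entails {G : Clause F ar | G ∈ tr} E ∧ ∀ G ∈ tr, clauseGT O D G) →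
    ∃ TR : List (Clause F ar), (∀ G ∈ TR, PP G) ∧
      (∀ E ∈ Cs, Entails {G : Clause F ar | G ∈ TR} E) ∧ ∀ G ∈ TR, clauseGT O D G := by
  intro Cs
  induction Cs with
  | nil => exact fun _ => ⟨[], by simp, by simp, by simp⟩
  | cons a l ihl =>
    intro h
    obtain ⟨tr, h1, h2, h3⟩ := h a (by simp)
    obtain ⟨TR', g1, g2, g3⟩ := ihl (fun E hE => h E (by simp [hE]))
    refine ⟨tr ++ TR', ?_, ?_, ?_⟩
    · intro G hG; rcases List.mem_append.1 hG with hG | hG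
      · exact h1 G hG
      · exact g1 G hG
    · intro E hE
      rcases List.mem_cons.1 hE with rfl | hE
      · exact h2.mono (fun G hG => List.mem_append.2 (Or.inl hG))
      · exact (g2 E hE).mono (fun G hG => List.mem_append.2 (Or.inr hG))
    · intro G hG; rcases List.mem_append.1 hG with hG | hG
      · exact h3 G hG
      · exact g3 G hG

section OrderFacts

variable {O : SimpOrd F ar}

lemma litGT_trans {L M P : Lit F ar} (h1 : litGT O L M) (h2 : litGT O M P) : litGT O L P :=
  multGT_trans (r := O.gt) (fun _ _ _ hab hbc => O.trans hab hbc) O.irrefl h1 h2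

lemma litGT_wf_flip : WellFounded (fun L M : Lit F ar => litGT O M L) :=
  InvImage.wf Lit.ms (multGT_wf O.wf)

lemma litGT_irrefl (L : Lit F ar) : ¬ litGT O L L :=
  fun h => litGT_wf_flip.asymmetric _ _ h h

lemma clauseGT_trans {A B D : Clause F ar} (h1 : clauseGT O A B) (h2 : clauseGT O B D) :
    clauseGT O A D :=
  multGT_trans (r := litGT O) (fun _ _ _ hab hbc => litGT_trans hab hbc) litGT_irrefl h1 h2

lemma clauseGT_wf_flip : WellFounded (fun A B : Clause F ar => clauseGT O B A) :=
  multGT_wf litGT_wf_flip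

end OrderFacts

end Aux2
/-- Every ground instance of a clause occurring in `S_ω` has a
trace: a finite set of persistent ground clauses that entail it and are all
smaller than or equal to it. -/
theorem trace_exists {F : Type} {ar : F → ℕ} (hF : Finite F) (hconst : ∃ c : F, ar c = 0)
    (O : SimpOrd F ar) (sel : SelFun F ar O) (𝕊 : Saturation O sel)
    (C : Clause F ar) (R : RForm F ar) (h : RForm.fvars R ⊆ Clause.fvars C)
    (hmem : (⟨C, R, h⟩ : PClause F ar) ∈ 𝕊.Somega)
    (θ : Subst F ar) (hθ : GroundingFor θ C) :
    ∃ Cs : List (Clause F ar), (∀ D ∈ Cs, 𝕊.Persistent D) ∧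
      Entails {D : Clause F ar | D ∈ Cs} (Clause.subst θ C) ∧
      ∀ D ∈ Cs, clauseGE O (Clause.subst θ C) D := by
  obtain ⟨g, hg⟩ := exists_ground_trm hconst
  have main : ∀ D : Clause F ar,
      (∃ pc ∈ 𝕊.Somega, ∃ θ' : Subst F ar, GroundingFor θ' pc.cl ∧ Clause.subst θ' pc.cl = D) →
      ∃ Cs : List (Clause F ar), (∀ E ∈ Cs, 𝕊.Persistent E) ∧
        Entails {E : Clause F ar | E ∈ Cs} D ∧ ∀ E ∈ Cs, clauseGE O D E := by
    intro D₀
    refine (clauseGT_wf_flip (O := O)).induction (C := fun D => (∃ pc ∈ 𝕊.Somega, ∃ θ' : Subst F ar,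
      GroundingFor θ' pc.cl ∧ Clause.subst θ' pc.cl = D) →
      ∃ Cs : List (Clause F ar), (∀ E ∈ Cs, 𝕊.Persistent E) ∧
        Entails {E : Clause F ar | E ∈ Cs} D ∧ ∀ E ∈ Cs, clauseGE O D E) D₀ ?_
    clear D₀
    rintro D IH ⟨pc₀, hpc₀, θ₀, hθ₀, hD⟩
    obtain ⟨i, hi⟩ := Set.mem_iUnion.1 hpc₀
    -- Lemma A: if some instance of a partial clause in some `S j` equals `D` and the
    -- grounding substitution satisfies the redundancy formula, then `D` has a trace.
    have lemA : ∀ j : ℕ, ∀ pc ∈ 𝕊.S j, ∀ θ' : Subst F ar, GroundingFor θ' pc.cl →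
        Clause.subst θ' pc.cl = D → RSat O θ' pc.rf →
        ∃ Cs : List (Clause F ar), (∀ E ∈ Cs, 𝕊.Persistent E) ∧
          Entails {E : Clause F ar | E ∈ Cs} D ∧ ∀ E ∈ Cs, clauseGE O D E := by
      intro j
      induction j with
      | zero =>
        intro pc hpc θ' _ _ hsat
        rw [𝕊.init pc hpc] at hsat
        exact absurd hsat (not_rsat_falsum hg θ')
      | succ j ihj =>
        intro pc hpc θ' hgr hDeq hsat
        rcases 𝕊.step j with ⟨prems, σ, concl, hprems, hinf, hS⟩ |
          ⟨pc', hpc', R₂, hh, hred, hS⟩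
        · rw [hS] at hpc
          rcases hpc with hpc | hpc
          · exact ihj pc hpc θ' hgr hDeq hsat
          · rw [Set.mem_singleton_iff] at hpc
            subst hpc
            exact absurd hsat (not_rsat_falsum hg θ')
        · rw [hS] at hpc
          rcases hpc with hpc | hpc
          · exact ihj pc hpc.1 θ' hgr hDeq hsat
          · rw [Set.mem_singleton_iff] at hpc
            subst hpc
            have hgvars : ∀ x ∈ (RForm.or pc'.rf R₂).fvars, (θ' x).IsGround :=
              fun x hx => groundingFor_vars hgr x (hh hx)
            rcases rsat_or_elim hgvars hsat with hsat1 | hsat2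
            · exact ihj pc' hpc' θ' hgr hDeq hsat1
            · have hDeq' : Clause.subst θ' pc'.cl = D := hDeq
              have hredD := hred θ' hgr hsat2
              rw [hDeq'] at hredD
              obtain ⟨Cs, hCsS, hent, hlt⟩ := hredD
              have htr : ∀ E ∈ Cs, ∃ tr : List (Clause F ar), (∀ G ∈ tr, 𝕊.Persistent G) ∧
                  Entails {G : Clause F ar | G ∈ tr} E ∧ ∀ G ∈ tr, clauseGT O D G := by
                intro E hE
                obtain ⟨pc'', hpc'', θ'', hEeq, hEg⟩ := hCsS E hE
                have hEDlt : clauseGT O D E := hlt E hE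
                have hprem : ∃ pcx ∈ 𝕊.Somega, ∃ θx : Subst F ar,
                    GroundingFor θx pcx.cl ∧ Clause.subst θx pcx.cl = E :=
                  ⟨pc'', Set.mem_iUnion.2 ⟨j, hpc''⟩, θ'',
                    by rw [GroundingFor, ← hEeq]; exact hEg, hEeq.symm⟩
                obtain ⟨tr, t1, t2, t3⟩ := IH E hEDlt hprem
                refine ⟨tr, t1, t2, fun G hG => ?_⟩
                rcases t3 G hG with hGE | rfl
                · exact clauseGT_trans hEDlt hGE
                · exact hEDlt
              obtain ⟨TR, p1, p2, p3⟩ := combine_traces 𝕊.Persistent D Cs htr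
              exact ⟨TR, p1, fun A hA => hent A (fun E hE => p2 E hE A hA),
                fun G hG => Or.inl (p3 G hG)⟩
    -- The clause `pc₀.cl` survives (possibly with an extended redundancy formula).
    have survive : ∀ j, i ≤ j → ∃ pc ∈ 𝕊.S j, pc.cl = pc₀.cl := by
      intro j hj
      induction j, hj using Nat.le_induction with
      | base => exact ⟨pc₀, hi, rfl⟩
      | succ j hj ihj =>
        obtain ⟨pc, hpc, hcl⟩ := ihj
        rcases 𝕊.step j with ⟨prems, σ, concl, _hp, _hi, hS⟩ | ⟨pc', hpc', R₂, hh, _hr, hS⟩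
        · exact ⟨pc, by rw [hS]; exact Set.mem_union_left _ hpc, hcl⟩
        · by_cases hpe : pc = pc'
          · refine ⟨⟨pc'.cl, RForm.or pc'.rf R₂, hh⟩,
              by rw [hS]; exact Set.mem_union_right _ rfl, ?_⟩
            rw [hpe] at hcl; exact hcl
          · exact ⟨pc, by rw [hS]; exact Set.mem_union_left _ ⟨hpc, hpe⟩, hcl⟩
    by_cases hex : ∃ j : ℕ, ∃ pc ∈ 𝕊.S j, ∃ θ' : Subst F ar,
        GroundingFor θ' pc.cl ∧ Clause.subst θ' pc.cl = D ∧ RSat O θ' pc.rf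
    · obtain ⟨j, pc, hpc, θ', h1, h2, h3⟩ := hex
      exact lemA j pc hpc θ' h1 h2 h3
    · have hDg : Clause.IsGround D := by rw [← hD]; exact hθ₀
      have hpers : 𝕊.Persistent D := by
        rw [Saturation.Persistent, Saturation.limit]
        refine Set.mem_iUnion.2 ⟨i, ?_⟩
        refine Set.mem_iInter.2 fun j => Set.mem_iInter.2 fun hj => ?_
        obtain ⟨pc, hpc, hcl⟩ := survive j hj
        refine Set.mem_iUnion₂.2 ⟨pc, hpc, θ₀, ?_, hDg, ?_⟩
        · rw [hcl]; exact hD.symm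
        · intro hsat
          exact hex ⟨j, pc, hpc, θ₀, by rw [hcl]; exact hθ₀, by rw [hcl]; exact hD, hsat⟩
      refine ⟨[D], ?_, entails_self, ?_⟩
      · intro E hE
        simp only [List.mem_singleton] at hE
        subst hE; exact hpers
      · intro E hE
        simp only [List.mem_singleton] at hE
        subst hE; exact Or.inr rfl
  exact main (Clause.subst θ C) ⟨⟨C, R, h⟩, hmem, θ, hθ, rfl⟩

end PaRC
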